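/- arXiv:2603.27875 — 4 statements merged into one kernel-verified Lean document; each statement's English description precedes it below -/
import Mathlib

section
/- Let μ ∈ ℝ, σ > 0, and let f : [0,∞) → ℝ be continuous and integrable (extended by 0 to (−∞,0)). Define Ψ(t,x) := (1/(σ√(2πt))) exp(−(x + μt)²/(2σ²t)) for t > 0, and for t > 0, x ≥ 0 set ṽ(t,x) := (f * Ψ(t,·))(x) − exp(−2μx/σ²) (f * Ψ(t,·))(−x), where (f * h)(z) := ∫₀^∞ f(y) h(z − y) dy. Then for all t > 0: ṽ(t,0) = 0, and for all x ≥ 0, ∂_t ṽ(t,x) = μ ∂_x ṽ(t,x) + (σ²/2) ∂_x² ṽ(t,x). That is, ṽ solves the advection–diffusion equation on the half line with homogeneous Dirichlet boundary condition at x = 0. -/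
/- STATEMENT 8: With `Ψ(t,x) = (1/(σ√(2πt))) exp(−(x+μt)²/(2σ²t))`, `f : [0,∞) → ℝ`
continuous and integrable (extended by 0 on `(−∞,0)`), and
`ṽ(t,x) = (f * Ψ(t,·))(x) − e^{−2μx/σ²}(f * Ψ(t,·))(−x)` for `t > 0`
(where `(f*h)(z) = ∫₀^∞ f(y) h(z−y) dy`), one has for all `t > 0`:
`ṽ(t,0) = 0` and, for all `x ≥ 0`, `∂_t ṽ(t,x) = μ ∂_x ṽ(t,x) + (σ²/2) ∂_x² ṽ(t,x)`. -/
open Real MeasureTheory Set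


noncomputable def gk (μ σ t z : ℝ) : ℝ :=
  (1 / (σ * Real.sqrt (2 * Real.pi * t))) * Real.exp (-(z + μ * t) ^ 2 / (2 * σ ^ 2 * t))

noncomputable def gk1 (μ σ t z : ℝ) : ℝ := (-(z + μ * t) / (σ ^ 2 * t)) * gk μ σ t z

noncomputable def gk2 (μ σ t z : ℝ) : ℝ :=
  ((z + μ * t) ^ 2 / (σ ^ 2 * t) ^ 2 - 1 / (σ ^ 2 * t)) * gk μ σ t z

lemma gk_hasDerivAt_z (μ σ t : ℝ) (hσ : σ ≠ 0) (ht : 0 < t) (z : ℝ) :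
    HasDerivAt (gk μ σ t) (gk1 μ σ t z) z := by
  have h1 : HasDerivAt (fun z : ℝ => -(z + μ * t) ^ 2 / (2 * σ ^ 2 * t))
      (-(2 * (z + μ * t)) / (2 * σ ^ 2 * t)) z := by
    have := (((hasDerivAt_id z).add_const (μ * t)).pow 2).neg.div_const (2 * σ ^ 2 * t)
    refine this.congr_deriv ?_
    simp only [id_eq]
    ring
  have h2 := (h1.exp).const_mul (1 / (σ * Real.sqrt (2 * Real.pi * t)))
  refine h2.congr_deriv ?_
  unfold gk1 gk
  field_simp

lemma gk1_hasDerivAt_z (μ σ t : ℝ) (hσ : σ ≠ 0) (ht : 0 < t) (z : ℝ) :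
    HasDerivAt (gk1 μ σ t) (gk2 μ σ t z) z := by
  have hl : HasDerivAt (fun z : ℝ => -(z + μ * t) / (σ ^ 2 * t)) (-1 / (σ ^ 2 * t)) z := by
    have := (((hasDerivAt_id z).add_const (μ * t)).neg).div_const (σ ^ 2 * t)
    exact this
  have h := hl.mul (gk_hasDerivAt_z μ σ t hσ ht z)
  refine h.congr_deriv ?_
  unfold gk2 gk1
  field_simp
  ring
lemma pre_hasDerivAt (σ : ℝ) (hσ : 0 < σ) (t : ℝ) (ht : 0 < t) :
    HasDerivAt (fun τ : ℝ => 1 / (σ * Real.sqrt (2 * Real.pi * τ)))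
      (-(1 / (σ * Real.sqrt (2 * Real.pi * t))) / (2 * t)) t := by
  have h2pit : 0 < 2 * Real.pi * t := by positivity
  have hs : 0 < Real.sqrt (2 * Real.pi * t) := Real.sqrt_pos.mpr h2pit
  have hs2 : Real.sqrt (2 * Real.pi * t) ^ 2 = 2 * Real.pi * t := Real.sq_sqrt h2pit.le
  have h1 : HasDerivAt (fun τ : ℝ => 2 * Real.pi * τ) (2 * Real.pi) t := by
    simpa using (hasDerivAt_id t).const_mul (2 * Real.pi)
  have h2 : HasDerivAt Real.sqrt (1 / (2 * Real.sqrt (2 * Real.pi * t))) (2 * Real.pi * t) :=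
    Real.hasDerivAt_sqrt (ne_of_gt h2pit)
  have h3 : HasDerivAt (fun τ : ℝ => Real.sqrt (2 * Real.pi * τ))
      (1 / (2 * Real.sqrt (2 * Real.pi * t)) * (2 * Real.pi)) t := h2.comp t h1
  have h4 := h3.const_mul σ
  have h5 := h4.inv (by positivity : σ * Real.sqrt (2 * Real.pi * t) ≠ 0)
  have : (fun τ : ℝ => (σ * Real.sqrt (2 * Real.pi * τ))⁻¹)
      = fun τ : ℝ => 1 / (σ * Real.sqrt (2 * Real.pi * τ)) := by
    funext τ; rw [one_div]
  rw [show ((fun y : ℝ => σ * Real.sqrt (2 * Real.pi * y))⁻¹) =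
    fun τ : ℝ => (σ * Real.sqrt (2 * Real.pi * τ))⁻¹ from rfl, this] at h5
  refine h5.congr_deriv ?_
  set s := Real.sqrt (2 * Real.pi * t) with hsdef
  rw [div_eq_div_iff (by positivity) (by positivity)]
  field_simp
  nlinarith [hs2, hs, Real.pi_pos]

lemma gk_hasDerivAt_t (μ σ : ℝ) (hσ : 0 < σ) (z t : ℝ) (ht : 0 < t) :
    HasDerivAt (fun τ => gk μ σ τ z)
      (μ * gk1 μ σ t z + σ ^ 2 / 2 * gk2 μ σ t z) t := by
  have hp := pre_hasDerivAt σ hσ t ht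
  have hn : HasDerivAt (fun τ : ℝ => -(z + μ * τ) ^ 2) (-(2 * (z + μ * t) * μ)) t := by
    have hl : HasDerivAt (fun τ : ℝ => z + μ * τ) μ t := by
      simpa using ((hasDerivAt_id t).const_mul μ).const_add z
    have := (hl.pow 2).neg
    refine this.congr_deriv ?_
    ring
  have hd : HasDerivAt (fun τ : ℝ => 2 * σ ^ 2 * τ) (2 * σ ^ 2) t := by
    simpa using (hasDerivAt_id t).const_mul (2 * σ ^ 2)
  have hE := hn.div hd (by positivity : 2 * σ ^ 2 * t ≠ 0)
  have h := hp.mul hE.exp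
  have hfun : (fun τ : ℝ => 1 / (σ * Real.sqrt (2 * Real.pi * τ)) *
      Real.exp (-(z + μ * τ) ^ 2 / (2 * σ ^ 2 * τ))) = fun τ => gk μ σ τ z := rfl
  simp only [Pi.div_apply] at h
  refine h.congr_deriv ?_
  unfold gk1 gk2 gk
  set s := Real.sqrt (2 * Real.pi * t)
  field_simp
  ring
lemma gk_pos (μ σ t z : ℝ) (hσ : 0 < σ) (ht : 0 < t) : 0 < gk μ σ t z := by
  unfold gk
  have : 0 < Real.sqrt (2 * Real.pi * t) := Real.sqrt_pos.mpr (by positivity)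
  positivity

lemma gk_moment (μ σ a b t z : ℝ) (hσ : 0 < σ) (ha : 0 < a) (hta : a ≤ t) (htb : t ≤ b) :
    gk μ σ t z ≤ 1 / (σ * Real.sqrt (2 * Real.pi * a)) ∧
    (z + μ * t) ^ 2 * gk μ σ t z ≤
      (2 * σ ^ 2 * b) * (1 / (σ * Real.sqrt (2 * Real.pi * a))) := by
  have ht : 0 < t := lt_of_lt_of_le ha hta
  have hb : 0 < b := lt_of_lt_of_le ht htb
  set w := z + μ * t with hw
  have hsa : 0 < Real.sqrt (2 * Real.pi * a) := Real.sqrt_pos.mpr (by positivity)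
  have hst : 0 < Real.sqrt (2 * Real.pi * t) := Real.sqrt_pos.mpr (by positivity)
  have hpre : 1 / (σ * Real.sqrt (2 * Real.pi * t)) ≤ 1 / (σ * Real.sqrt (2 * Real.pi * a)) := by
    apply one_div_le_one_div_of_le (by positivity)
    have h := Real.sqrt_le_sqrt (show 2 * Real.pi * a ≤ 2 * Real.pi * t by
      nlinarith [Real.pi_pos])
    exact mul_le_mul_of_nonneg_left h hσ.le
  have hexp1 : Real.exp (-w ^ 2 / (2 * σ ^ 2 * t)) ≤ 1 := by
    rw [Real.exp_le_one_iff]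
    apply div_nonpos_of_nonpos_of_nonneg (neg_nonpos.mpr (sq_nonneg w)) (by positivity)
  constructor
  · unfold gk
    calc 1 / (σ * Real.sqrt (2 * Real.pi * t)) * Real.exp (-w ^ 2 / (2 * σ ^ 2 * t))
        ≤ 1 / (σ * Real.sqrt (2 * Real.pi * a)) * 1 := by
          apply mul_le_mul hpre hexp1 (Real.exp_pos _).le (by positivity)
      _ = 1 / (σ * Real.sqrt (2 * Real.pi * a)) := mul_one _
  · unfold gk
    have hkey : w ^ 2 * Real.exp (-w ^ 2 / (2 * σ ^ 2 * t)) ≤ 2 * σ ^ 2 * b := by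
      have hmono : Real.exp (-w ^ 2 / (2 * σ ^ 2 * t)) ≤
          Real.exp (-(w ^ 2 / (2 * σ ^ 2 * b))) := by
        apply Real.exp_le_exp.mpr
        rw [neg_div, neg_le_neg_iff]
        apply div_le_div_of_nonneg_left (by positivity) (by positivity)
        nlinarith
      calc w ^ 2 * Real.exp (-w ^ 2 / (2 * σ ^ 2 * t))
          ≤ w ^ 2 * Real.exp (-(w ^ 2 / (2 * σ ^ 2 * b))) := by
            apply mul_le_mul_of_nonneg_left hmono (by positivity)
        _ ≤ 2 * σ ^ 2 * b := by
            rw [Real.exp_neg, mul_inv_le_iff₀ (Real.exp_pos _)]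
            have hx : (2 * σ ^ 2 * b) * (w ^ 2 / (2 * σ ^ 2 * b)) = w ^ 2 := by
              field_simp
            nlinarith [Real.add_one_le_exp (w ^ 2 / (2 * σ ^ 2 * b)), hx,
              Real.exp_pos (w ^ 2 / (2 * σ ^ 2 * b)),
              show (0:ℝ) < 2 * σ ^ 2 * b by positivity]
    calc w ^ 2 * (1 / (σ * Real.sqrt (2 * Real.pi * t)) * Real.exp (-w ^ 2 / (2 * σ ^ 2 * t)))
        ≤ w ^ 2 * (1 / (σ * Real.sqrt (2 * Real.pi * a)) * Real.exp (-w ^ 2 / (2 * σ ^ 2 * t))) := by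
          apply mul_le_mul_of_nonneg_left _ (by positivity)
          apply mul_le_mul_of_nonneg_right hpre (Real.exp_pos _).le
      _ = (w ^ 2 * Real.exp (-w ^ 2 / (2 * σ ^ 2 * t))) * (1 / (σ * Real.sqrt (2 * Real.pi * a))) := by
          ring
      _ ≤ (2 * σ ^ 2 * b) * (1 / (σ * Real.sqrt (2 * Real.pi * a))) := by
          apply mul_le_mul_of_nonneg_right hkey (by positivity)

lemma gk_all_bounds (μ σ a b : ℝ) (hσ : 0 < σ) (ha : 0 < a) (hab : a ≤ b) :
    ∃ C : ℝ, 0 ≤ C ∧ ∀ t, a ≤ t → t ≤ b → ∀ z,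
      |gk μ σ t z| ≤ C ∧ |gk1 μ σ t z| ≤ C ∧ |gk2 μ σ t z| ≤ C := by
  have hsa : 0 < Real.sqrt (2 * Real.pi * a) := Real.sqrt_pos.mpr (by positivity)
  set A : ℝ := 1 / (σ * Real.sqrt (2 * Real.pi * a)) with hA_def
  have hA : 0 < A := by positivity
  set M : ℝ := 2 * σ ^ 2 * b with hM_def
  have hb : 0 < b := lt_of_lt_of_le ha hab
  have hM : 0 < M := by positivity
  refine ⟨A + (A + M * A) / (σ ^ 2 * a) + (M * A / (σ ^ 2 * a) ^ 2 + A / (σ ^ 2 * a)),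
    by positivity, ?_⟩
  intro t hta htb z
  have ht : 0 < t := lt_of_lt_of_le ha hta
  have hgk := gk_pos μ σ t z hσ ht
  obtain ⟨h0, h2⟩ := gk_moment μ σ a b t z hσ ha hta htb
  set w := z + μ * t with hw
  have hden : 0 < σ ^ 2 * t := by positivity
  have hdena : 0 < σ ^ 2 * a := by positivity
  have hdenle : σ ^ 2 * a ≤ σ ^ 2 * t := by nlinarith
  have habsw : |w| ≤ 1 + w ^ 2 := by nlinarith [abs_nonneg w, sq_abs w, sq_nonneg (|w| - 1)]
  have hwgk : |w| * gk μ σ t z ≤ A + M * A := by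
    calc |w| * gk μ σ t z ≤ (1 + w ^ 2) * gk μ σ t z :=
          mul_le_mul_of_nonneg_right habsw hgk.le
      _ = gk μ σ t z + w ^ 2 * gk μ σ t z := by ring
      _ ≤ A + M * A := by
          have h2' := h2
          rw [← hA_def] at h2'
          rw [hM_def]
          linarith
  have hterm_nonneg1 : (0:ℝ) ≤ (A + M * A) / (σ ^ 2 * a) := by positivity
  have hterm_nonneg2 : (0:ℝ) ≤ M * A / (σ ^ 2 * a) ^ 2 + A / (σ ^ 2 * a) := by positivity
  refine ⟨?_, ?_, ?_⟩
  · rw [abs_of_pos hgk]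
    linarith [h0]
  · unfold gk1
    rw [← hw, abs_mul, abs_of_pos hgk, abs_div, abs_neg, abs_of_pos hden]
    have hmain : |w| / (σ ^ 2 * t) * gk μ σ t z = (|w| * gk μ σ t z) / (σ ^ 2 * t) := by
      ring
    rw [hmain]
    have : (|w| * gk μ σ t z) / (σ ^ 2 * t) ≤ (A + M * A) / (σ ^ 2 * a) :=
      div_le_div₀ (by positivity) hwgk hdena hdenle
    linarith
  · unfold gk2
    rw [← hw, abs_mul, abs_of_pos hgk]
    have habs2 : |w ^ 2 / (σ ^ 2 * t) ^ 2 - 1 / (σ ^ 2 * t)| ≤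
        w ^ 2 / (σ ^ 2 * t) ^ 2 + 1 / (σ ^ 2 * t) := by
      calc |w ^ 2 / (σ ^ 2 * t) ^ 2 - 1 / (σ ^ 2 * t)|
          ≤ |w ^ 2 / (σ ^ 2 * t) ^ 2| + |1 / (σ ^ 2 * t)| := abs_sub _ _
        _ = w ^ 2 / (σ ^ 2 * t) ^ 2 + 1 / (σ ^ 2 * t) := by
            rw [abs_of_nonneg (by positivity), abs_of_nonneg (by positivity)]
    have hmul : |w ^ 2 / (σ ^ 2 * t) ^ 2 - 1 / (σ ^ 2 * t)| * gk μ σ t z ≤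
        (w ^ 2 / (σ ^ 2 * t) ^ 2 + 1 / (σ ^ 2 * t)) * gk μ σ t z :=
      mul_le_mul_of_nonneg_right habs2 hgk.le
    have hsplit : (w ^ 2 / (σ ^ 2 * t) ^ 2 + 1 / (σ ^ 2 * t)) * gk μ σ t z =
        (w ^ 2 * gk μ σ t z) / (σ ^ 2 * t) ^ 2 + gk μ σ t z / (σ ^ 2 * t) := by
      ring
    have hB1 : (w ^ 2 * gk μ σ t z) / (σ ^ 2 * t) ^ 2 ≤ M * A / (σ ^ 2 * a) ^ 2 :=
      div_le_div₀ (by positivity) h2 (by positivity) (by nlinarith)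
    have hB2 : gk μ σ t z / (σ ^ 2 * t) ≤ A / (σ ^ 2 * a) :=
      div_le_div₀ hA.le h0 hdena hdenle
    calc |w ^ 2 / (σ ^ 2 * t) ^ 2 - 1 / (σ ^ 2 * t)| * gk μ σ t z
        ≤ (w ^ 2 * gk μ σ t z) / (σ ^ 2 * t) ^ 2 + gk μ σ t z / (σ ^ 2 * t) := by
          rw [← hsplit]; exact hmul
      _ ≤ M * A / (σ ^ 2 * a) ^ 2 + A / (σ ^ 2 * a) := add_le_add hB1 hB2
      _ ≤ A + (A + M * A) / (σ ^ 2 * a) + (M * A / (σ ^ 2 * a) ^ 2 + A / (σ ^ 2 * a)) := by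
          linarith
lemma param_deriv (f : ℝ → ℝ) (hf_int : MeasureTheory.Integrable f)
    (K K' : ℝ → ℝ → ℝ) (s₀ ε C : ℝ) (hε : 0 < ε)
    (hKcont : ∀ s ∈ Metric.ball s₀ ε, Continuous (K s))
    (hK'cont : Continuous (K' s₀))
    (hboundK' : ∀ s ∈ Metric.ball s₀ ε, ∀ y : ℝ, |K' s y| ≤ C)
    (hboundK : ∀ y : ℝ, |K s₀ y| ≤ C)
    (hderiv : ∀ y : ℝ, ∀ s ∈ Metric.ball s₀ ε, HasDerivAt (fun s => K s y) (K' s y) s) :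
    MeasureTheory.Integrable (fun y => f y * K' s₀ y)
      (MeasureTheory.volume.restrict (Set.Ioi (0:ℝ))) ∧
    HasDerivAt (fun s => ∫ y in Set.Ioi (0:ℝ), f y * K s y)
      (∫ y in Set.Ioi (0:ℝ), f y * K' s₀ y) s₀ := by
  have hC : 0 ≤ C := le_trans (abs_nonneg _) (hboundK 0)
  have hfae : MeasureTheory.AEStronglyMeasurable f
      (MeasureTheory.volume.restrict (Set.Ioi (0:ℝ))) :=
    hf_int.aestronglyMeasurable.restrict
  have hbound_int : MeasureTheory.Integrable (fun y => |f y| * C)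
      (MeasureTheory.volume.restrict (Set.Ioi (0:ℝ))) :=
    (hf_int.norm.mul_const C).restrict
  have hmeas : ∀ᶠ s in nhds s₀, MeasureTheory.AEStronglyMeasurable
      (fun y => f y * K s y) (MeasureTheory.volume.restrict (Set.Ioi (0:ℝ))) := by
    filter_upwards [Metric.ball_mem_nhds s₀ hε] with s hs
    exact hfae.mul ((hKcont s hs).aestronglyMeasurable.restrict)
  have hint : MeasureTheory.Integrable (fun y => f y * K s₀ y)
      (MeasureTheory.volume.restrict (Set.Ioi (0:ℝ))) := by
    apply hbound_int.mono
      (hfae.mul ((hKcont s₀ (Metric.mem_ball_self hε)).aestronglyMeasurable.restrict))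
    filter_upwards with y
    show ‖f y * K s₀ y‖ ≤ ‖|f y| * C‖
    rw [Real.norm_eq_abs, Real.norm_eq_abs, abs_mul, abs_mul, abs_abs, abs_of_nonneg hC]
    exact mul_le_mul_of_nonneg_left (hboundK y) (abs_nonneg _)
  have h'meas : MeasureTheory.AEStronglyMeasurable (fun y => f y * K' s₀ y)
      (MeasureTheory.volume.restrict (Set.Ioi (0:ℝ))) :=
    hfae.mul (hK'cont.aestronglyMeasurable.restrict)
  have hbnd : ∀ᵐ y ∂(MeasureTheory.volume.restrict (Set.Ioi (0:ℝ))),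
      ∀ s ∈ Metric.ball s₀ ε, ‖f y * K' s y‖ ≤ |f y| * C := by
    filter_upwards with y s hs
    rw [Real.norm_eq_abs, abs_mul]
    exact mul_le_mul_of_nonneg_left (hboundK' s hs y) (abs_nonneg _)
  have hdiff : ∀ᵐ y ∂(MeasureTheory.volume.restrict (Set.Ioi (0:ℝ))),
      ∀ s ∈ Metric.ball s₀ ε,
        HasDerivAt (fun s => f y * K s y) (f y * K' s y) s := by
    filter_upwards with y s hs
    exact (hderiv y s hs).const_mul (f y)
  exact hasDerivAt_integral_of_dominated_loc_of_deriv_le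
    (F := fun s y => f y * K s y) (F' := fun s y => f y * K' s y)
    (bound := fun y => |f y| * C) (Metric.ball_mem_nhds s₀ hε) hmeas hint h'meas hbnd hbound_int hdiff
lemma gk_cont (μ σ t : ℝ) : Continuous (gk μ σ t) := by
  unfold gk
  exact continuous_const.mul
    (Real.continuous_exp.comp (((continuous_id.add continuous_const).pow 2).neg.div_const _))

lemma gk1_cont (μ σ t : ℝ) : Continuous (gk1 μ σ t) := by
  unfold gk1
  exact (((continuous_id.add continuous_const).neg.div_const _)).mul (gk_cont μ σ t)

lemma gk2_cont (μ σ t : ℝ) : Continuous (gk2 μ σ t) := by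
  unfold gk2
  exact ((((continuous_id.add continuous_const).pow 2).div_const _).sub continuous_const).mul
    (gk_cont μ σ t)

noncomputable def cu (μ σ : ℝ) (f : ℝ → ℝ) (t x : ℝ) : ℝ :=
  ∫ y in Set.Ioi (0:ℝ), f y * gk μ σ t (x - y)
noncomputable def cu1 (μ σ : ℝ) (f : ℝ → ℝ) (t x : ℝ) : ℝ :=
  ∫ y in Set.Ioi (0:ℝ), f y * gk1 μ σ t (x - y)
noncomputable def cu2 (μ σ : ℝ) (f : ℝ → ℝ) (t x : ℝ) : ℝ :=
  ∫ y in Set.Ioi (0:ℝ), f y * gk2 μ σ t (x - y)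

lemma gk_shift_deriv (μ σ t : ℝ) (hσ : σ ≠ 0) (ht : 0 < t) (y s : ℝ) :
    HasDerivAt (fun s => gk μ σ t (s - y)) (gk1 μ σ t (s - y)) s := by
  have h := (gk_hasDerivAt_z μ σ t hσ ht (s - y)).comp s ((hasDerivAt_id s).sub_const y)
  simp at h; exact h

lemma gk1_shift_deriv (μ σ t : ℝ) (hσ : σ ≠ 0) (ht : 0 < t) (y s : ℝ) :
    HasDerivAt (fun s => gk1 μ σ t (s - y)) (gk2 μ σ t (s - y)) s := by
  have h := (gk1_hasDerivAt_z μ σ t hσ ht (s - y)).comp s ((hasDerivAt_id s).sub_const y)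
  simp at h; exact h

lemma cu_Dx (μ σ : ℝ) (hσ : 0 < σ) (f : ℝ → ℝ) (hf_int : MeasureTheory.Integrable f)
    (t : ℝ) (ht : 0 < t) (x : ℝ) :
    MeasureTheory.Integrable (fun y => f y * gk1 μ σ t (x - y))
      (MeasureTheory.volume.restrict (Set.Ioi (0:ℝ))) ∧
    HasDerivAt (cu μ σ f t) (cu1 μ σ f t x) x := by
  obtain ⟨C, hC0, hC⟩ := gk_all_bounds μ σ t t hσ ht le_rfl
  have h := param_deriv f hf_int (fun s y => gk μ σ t (s - y)) (fun s y => gk1 μ σ t (s - y))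
    x 1 C one_pos
    (fun s _ => (gk_cont μ σ t).comp (continuous_const.sub continuous_id))
    ((gk1_cont μ σ t).comp (continuous_const.sub continuous_id))
    (fun s _ y => (hC t le_rfl le_rfl (s - y)).2.1)
    (fun y => (hC t le_rfl le_rfl (x - y)).1)
    (fun y s _ => gk_shift_deriv μ σ t hσ.ne' ht y s)
  exact h

lemma cu_Dxx (μ σ : ℝ) (hσ : 0 < σ) (f : ℝ → ℝ) (hf_int : MeasureTheory.Integrable f)
    (t : ℝ) (ht : 0 < t) (x : ℝ) :
    MeasureTheory.Integrable (fun y => f y * gk2 μ σ t (x - y))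
      (MeasureTheory.volume.restrict (Set.Ioi (0:ℝ))) ∧
    HasDerivAt (cu1 μ σ f t) (cu2 μ σ f t x) x := by
  obtain ⟨C, hC0, hC⟩ := gk_all_bounds μ σ t t hσ ht le_rfl
  have h := param_deriv f hf_int (fun s y => gk1 μ σ t (s - y)) (fun s y => gk2 μ σ t (s - y))
    x 1 C one_pos
    (fun s _ => (gk1_cont μ σ t).comp (continuous_const.sub continuous_id))
    ((gk2_cont μ σ t).comp (continuous_const.sub continuous_id))
    (fun s _ y => (hC t le_rfl le_rfl (s - y)).2.2)
    (fun y => (hC t le_rfl le_rfl (x - y)).2.1)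
    (fun y s _ => gk1_shift_deriv μ σ t hσ.ne' ht y s)
  exact h

lemma cu_Dt (μ σ : ℝ) (hσ : 0 < σ) (f : ℝ → ℝ) (hf_int : MeasureTheory.Integrable f)
    (t : ℝ) (ht : 0 < t) (x : ℝ) :
    HasDerivAt (fun τ => cu μ σ f τ x)
      (μ * cu1 μ σ f t x + σ ^ 2 / 2 * cu2 μ σ f t x) t := by
  obtain ⟨C, hC0, hC⟩ := gk_all_bounds μ σ (t / 2) (3 * t / 2) hσ (by linarith) (by linarith)
  have hmem : ∀ s ∈ Metric.ball t (t / 2), t / 2 ≤ s ∧ s ≤ 3 * t / 2 := by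
    intro s hs
    rw [Metric.mem_ball, Real.dist_eq, abs_sub_lt_iff] at hs
    constructor <;> linarith [hs.1, hs.2]
  have htmem : t / 2 ≤ t ∧ t ≤ 3 * t / 2 := ⟨by linarith, by linarith⟩
  have h := param_deriv f hf_int (fun s y => gk μ σ s (x - y))
    (fun s y => μ * gk1 μ σ s (x - y) + σ ^ 2 / 2 * gk2 μ σ s (x - y))
    t (t / 2) ((|μ| + σ ^ 2 / 2) * C + C) (by linarith)
    (fun s hs => (gk_cont μ σ s).comp (continuous_const.sub continuous_id))
    (((continuous_const).mul ((gk1_cont μ σ t).comp (continuous_const.sub continuous_id))).add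
      ((continuous_const).mul ((gk2_cont μ σ t).comp (continuous_const.sub continuous_id))))
    ?_ ?_ ?_
  · -- convert the derivative value
    have hint1 := (cu_Dx μ σ hσ f hf_int t ht x).1
    have hint2 := (cu_Dxx μ σ hσ f hf_int t ht x).1
    have heq : (fun y => f y * (μ * gk1 μ σ t (x - y) + σ ^ 2 / 2 * gk2 μ σ t (x - y)))
        = fun y => μ * (f y * gk1 μ σ t (x - y)) + σ ^ 2 / 2 * (f y * gk2 μ σ t (x - y)) := by
      funext y; ring
    have hval : (∫ y in Set.Ioi (0:ℝ),
        f y * (μ * gk1 μ σ t (x - y) + σ ^ 2 / 2 * gk2 μ σ t (x - y)))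
        = μ * cu1 μ σ f t x + σ ^ 2 / 2 * cu2 μ σ f t x := by
      rw [heq, MeasureTheory.integral_add (hint1.const_mul μ) (hint2.const_mul (σ ^ 2 / 2)),
        MeasureTheory.integral_const_mul, MeasureTheory.integral_const_mul]
      rfl
    rw [hval] at h
    exact h.2
  · -- bound on K'
    intro s hs y
    obtain ⟨h1, h2⟩ := hmem s hs
    have hb1 := (hC s h1 h2 (x - y)).2.1
    have hb2 := (hC s h1 h2 (x - y)).2.2
    calc |μ * gk1 μ σ s (x - y) + σ ^ 2 / 2 * gk2 μ σ s (x - y)|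
        ≤ |μ * gk1 μ σ s (x - y)| + |σ ^ 2 / 2 * gk2 μ σ s (x - y)| := abs_add_le _ _
      _ = |μ| * |gk1 μ σ s (x - y)| + σ ^ 2 / 2 * |gk2 μ σ s (x - y)| := by
          rw [abs_mul, abs_mul, abs_of_nonneg (by positivity : (0:ℝ) ≤ σ ^ 2 / 2)]
      _ ≤ |μ| * C + σ ^ 2 / 2 * C := by
          have := abs_nonneg μ
          gcongr
      _ ≤ (|μ| + σ ^ 2 / 2) * C + C := by nlinarith
  · -- bound on K at t
    intro y
    have := (hC t htmem.1 htmem.2 (x - y)).1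
    nlinarith [abs_nonneg μ, sq_nonneg σ]
  · -- differentiability in s
    intro y s hs
    have hspos : 0 < s := lt_of_lt_of_le (by linarith) (hmem s hs).1
    exact gk_hasDerivAt_t μ σ hσ (x - y) s hspos


theorem reflected_convolution_solves_dirichlet_advection_diffusion
    (μ σ : ℝ) (hσ : 0 < σ)
    (f : ℝ → ℝ) (hf_cont : ContinuousOn f (Set.Ici 0))
    (hf_zero : ∀ x : ℝ, x < 0 → f x = 0)
    (hf_int : MeasureTheory.Integrable f)
    (Ψ : ℝ → ℝ → ℝ)
    (hΨ : ∀ t : ℝ, 0 < t → ∀ x : ℝ,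
      Ψ t x = (1 / (σ * Real.sqrt (2 * Real.pi * t))) *
        Real.exp (-(x + μ * t) ^ 2 / (2 * σ ^ 2 * t)))
    (v : ℝ → ℝ → ℝ)
    (hv : ∀ t : ℝ, 0 < t → ∀ x : ℝ,
      v t x = (∫ y in Set.Ioi (0:ℝ), f y * Ψ t (x - y)) -
        Real.exp (-2 * μ * x / σ ^ 2) * ∫ y in Set.Ioi (0:ℝ), f y * Ψ t (-x - y)) :
    ∀ t : ℝ, 0 < t →
      v t 0 = 0 ∧
      ∀ x : ℝ, 0 ≤ x →
        HasDerivAt (fun τ => v τ x)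
          (μ * deriv (v t) x + σ ^ 2 / 2 * deriv (deriv (v t)) x) t := by
  intro t ht
  have hσ' : σ ≠ 0 := hσ.ne'
  constructor
  · rw [hv t ht 0]
    norm_num
  · intro x _
    have hveq : ∀ τ, 0 < τ → ∀ ξ : ℝ,
        v τ ξ = cu μ σ f τ ξ - Real.exp (-2 * μ * ξ / σ ^ 2) * cu μ σ f τ (-ξ) := by
      intro τ hτ ξ
      rw [hv τ hτ ξ]
      unfold cu
      simp only [hΨ τ hτ]
      rfl
    have hnegcu : ∀ ξ : ℝ, HasDerivAt (fun ξ : ℝ => cu μ σ f t (-ξ)) (-cu1 μ σ f t (-ξ)) ξ := by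
      intro ξ
      have := ((cu_Dx μ σ hσ f hf_int t ht (-ξ)).2).comp ξ (hasDerivAt_neg ξ)
      simp at this; exact this
    have hnegcu1 : ∀ ξ : ℝ, HasDerivAt (fun ξ : ℝ => cu1 μ σ f t (-ξ)) (-cu2 μ σ f t (-ξ)) ξ := by
      intro ξ
      have := ((cu_Dxx μ σ hσ f hf_int t ht (-ξ)).2).comp ξ (hasDerivAt_neg ξ)
      simp at this; exact this
    have hexp : ∀ ξ : ℝ, HasDerivAt (fun ξ : ℝ => Real.exp (-2 * μ * ξ / σ ^ 2))
        (-2 * μ / σ ^ 2 * Real.exp (-2 * μ * ξ / σ ^ 2)) ξ := by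
      intro ξ
      have hlin : HasDerivAt (fun ξ : ℝ => -2 * μ * ξ / σ ^ 2) (-2 * μ / σ ^ 2) ξ := by
        have := ((hasDerivAt_id ξ).const_mul (-2 * μ)).div_const (σ ^ 2)
        simpa using this
      simpa [mul_comm] using hlin.exp
    set w1 : ℝ → ℝ := fun ξ => cu1 μ σ f t ξ
        + 2 * μ / σ ^ 2 * Real.exp (-2 * μ * ξ / σ ^ 2) * cu μ σ f t (-ξ)
        + Real.exp (-2 * μ * ξ / σ ^ 2) * cu1 μ σ f t (-ξ) with hw1
    have hD1 : ∀ ξ : ℝ, HasDerivAt (v t) (w1 ξ) ξ := by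
      intro ξ
      have hfun : v t = fun ξ => cu μ σ f t ξ - Real.exp (-2 * μ * ξ / σ ^ 2) * cu μ σ f t (-ξ) :=
        funext (hveq t ht)
      rw [hfun]
      have h1 := (cu_Dx μ σ hσ f hf_int t ht ξ).2
      have := h1.sub ((hexp ξ).mul (hnegcu ξ))
      refine this.congr_deriv ?_
      rw [hw1]
      field_simp
      ring
    have hderiv1 : deriv (v t) = w1 := funext fun ξ => (hD1 ξ).deriv
    have hD2 : HasDerivAt w1
        (cu2 μ σ f t x - 4 * μ ^ 2 / σ ^ 4 * Real.exp (-2 * μ * x / σ ^ 2) * cu μ σ f t (-x)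
          - 4 * μ / σ ^ 2 * Real.exp (-2 * μ * x / σ ^ 2) * cu1 μ σ f t (-x)
          - Real.exp (-2 * μ * x / σ ^ 2) * cu2 μ σ f t (-x)) x := by
      rw [hw1]
      have h1 := (cu_Dxx μ σ hσ f hf_int t ht x).2
      have h2 := ((hexp x).const_mul (2 * μ / σ ^ 2)).mul (hnegcu x)
      have h3 := (hexp x).mul (hnegcu1 x)
      have := (h1.add h2).add h3
      refine this.congr_deriv ?_
      field_simp
      ring
    have hg : HasDerivAt
        (fun τ => cu μ σ f τ x - Real.exp (-2 * μ * x / σ ^ 2) * cu μ σ f τ (-x))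
        ((μ * cu1 μ σ f t x + σ ^ 2 / 2 * cu2 μ σ f t x)
          - Real.exp (-2 * μ * x / σ ^ 2) *
            (μ * cu1 μ σ f t (-x) + σ ^ 2 / 2 * cu2 μ σ f t (-x))) t :=
      (cu_Dt μ σ hσ f hf_int t ht x).sub
        ((cu_Dt μ σ hσ f hf_int t ht (-x)).const_mul _)
    have hev : (fun τ => v τ x) =ᶠ[nhds t]
        (fun τ => cu μ σ f τ x - Real.exp (-2 * μ * x / σ ^ 2) * cu μ σ f τ (-x)) := by
      filter_upwards [isOpen_Ioi.mem_nhds (show t ∈ Set.Ioi (0:ℝ) from ht)] with τ hτ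
      exact hveq τ hτ x
    have hmain := hg.congr_of_eventuallyEq hev
    rw [hderiv1, hD2.deriv]
    refine hmain.congr_deriv ?_
    rw [hw1]
    field_simp
    ring
end

section
/- Let μ ∈ ℝ, σ > 0, and define Ψ(t,x) := (1/(σ√(2πt))) exp(−(x + μt)²/(2σ²t)) for t > 0. Let f : ℝ → ℝ be continuous with compact support contained in (0,∞). Then for every x ≥ 0: lim_{t → 0⁺} [ (f * Ψ(t,·))(x) − exp(−2μx/σ²) (f * Ψ(t,·))(−x) ] = f(x), where (f * h)(z) := ∫₀^∞ f(y) h(z − y) dy. -/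
open MeasureTheory Real Filter Set

lemma gauss_integrable : Integrable (fun u : ℝ => Real.exp (-(u ^ 2) / 2)) := by
  have : (fun u : ℝ => Real.exp (-(u ^ 2) / 2)) = fun u => Real.exp (-(1/2 : ℝ) * u ^ 2) := by
    ext u; ring_nf
  rw [this]
  exact integrable_exp_neg_mul_sq (by norm_num)

lemma gauss_int : ∫ u : ℝ, Real.exp (-(u ^ 2) / 2) = Real.sqrt (2 * Real.pi) := by
  have : (fun u : ℝ => Real.exp (-(u ^ 2) / 2)) = fun u => Real.exp (-(1/2 : ℝ) * u ^ 2) := by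
    ext u; ring_nf
  rw [this, integral_gaussian]
  rw [show Real.pi / (1/2 : ℝ) = 2 * Real.pi by ring]

lemma cov (μ σ : ℝ) (hσ : 0 < σ) (t : ℝ) (ht : 0 < t) (f : ℝ → ℝ)
    (hf0 : ∀ y, y ∉ Set.Ioi (0:ℝ) → f y = 0) (z : ℝ) :
    ∫ y in Set.Ioi (0:ℝ), f y * ((1 / (σ * Real.sqrt (2 * Real.pi * t))) *
        Real.exp (-(z - y + μ * t) ^ 2 / (2 * σ ^ 2 * t)))
    = ∫ u, f (z + μ * t + σ * Real.sqrt t * u) *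
        ((Real.sqrt (2 * Real.pi))⁻¹ * Real.exp (-(u ^ 2) / 2)) := by
  set s : ℝ := σ * Real.sqrt t with hs_def
  have hst : 0 < Real.sqrt t := Real.sqrt_pos.2 ht
  have hs : 0 < s := mul_pos hσ hst
  set c : ℝ := z + μ * t with hc_def
  set F : ℝ → ℝ := fun y => f y * ((1 / (σ * Real.sqrt (2 * Real.pi * t))) *
        Real.exp (-(z - y + μ * t) ^ 2 / (2 * σ ^ 2 * t))) with hF_def
  have h1 : ∫ y in Set.Ioi (0:ℝ), F y = ∫ y, F y :=
    setIntegral_eq_integral_of_forall_compl_eq_zero (fun y hy => by simp [hF_def, hf0 y hy])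
  have h2 : ∫ u : ℝ, F (s * u + c) = |s⁻¹| • ∫ v : ℝ, F (v + c) :=
    MeasureTheory.Measure.integral_comp_mul_left (fun v => F (v + c)) s
  have h3 : ∫ v : ℝ, F (v + c) = ∫ y, F y := integral_add_right_eq_self F c
  have hpt : ∀ u : ℝ, F (s * u + c) =
      s⁻¹ * (f (z + μ * t + σ * Real.sqrt t * u) *
        ((Real.sqrt (2 * Real.pi))⁻¹ * Real.exp (-(u ^ 2) / 2))) := by
    intro u
    have harg : s * u + c = z + μ * t + σ * Real.sqrt t * u := by
      rw [hs_def, hc_def]; ring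
    have hexp : -(z - (s * u + c) + μ * t) ^ 2 / (2 * σ ^ 2 * t) = -(u ^ 2) / 2 := by
      have h4 : z - (s * u + c) + μ * t = -(s * u) := by rw [hc_def]; ring
      rw [h4]
      have hs2 : s ^ 2 = σ ^ 2 * t := by
        rw [hs_def, mul_pow, Real.sq_sqrt ht.le]
      have : (-(s * u)) ^ 2 = σ ^ 2 * t * u ^ 2 := by rw [← hs2]; ring
      rw [this]
      field_simp
    have hnorm : 1 / (σ * Real.sqrt (2 * Real.pi * t)) = s⁻¹ * (Real.sqrt (2 * Real.pi))⁻¹ := by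
      rw [Real.sqrt_mul (by positivity : (0:ℝ) ≤ 2 * Real.pi), hs_def]
      field_simp
    simp only [hF_def]
    rw [hexp, hnorm, harg]
    ring
  rw [h1, ← h3]
  have h5 : ∫ u : ℝ, F (s * u + c) = s⁻¹ * ∫ u, f (z + μ * t + σ * Real.sqrt t * u) *
      ((Real.sqrt (2 * Real.pi))⁻¹ * Real.exp (-(u ^ 2) / 2)) := by
    rw [← integral_const_mul]
    exact integral_congr_ae (Filter.Eventually.of_forall hpt)
  rw [h5, abs_of_pos (inv_pos.2 hs), smul_eq_mul] at h2
  exact (mul_left_cancel₀ (inv_ne_zero hs.ne') h2).symm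

lemma tendsto_aux (μ σ : ℝ) (f : ℝ → ℝ) (hf_cont : Continuous f)
    (hf_supp : HasCompactSupport f) (z : ℝ) :
    Filter.Tendsto (fun t => ∫ u, f (z + μ * t + σ * Real.sqrt t * u) *
        ((Real.sqrt (2 * Real.pi))⁻¹ * Real.exp (-(u ^ 2) / 2)))
      (nhdsWithin 0 (Set.Ioi 0)) (nhds (f z)) := by
  obtain ⟨M, hM⟩ := hf_cont.bounded_above_of_compact_support hf_supp
  have hgi : Integrable (fun u : ℝ => (Real.sqrt (2 * Real.pi))⁻¹ * Real.exp (-(u ^ 2) / 2)) :=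
    gauss_integrable.const_mul _
  have key : Filter.Tendsto (fun t => ∫ u, f (z + μ * t + σ * Real.sqrt t * u) *
        ((Real.sqrt (2 * Real.pi))⁻¹ * Real.exp (-(u ^ 2) / 2)))
      (nhdsWithin 0 (Set.Ioi 0))
      (nhds (∫ u, f z * ((Real.sqrt (2 * Real.pi))⁻¹ * Real.exp (-(u ^ 2) / 2)))) := by
    apply tendsto_integral_filter_of_dominated_convergence
      (fun u => M * ((Real.sqrt (2 * Real.pi))⁻¹ * Real.exp (-(u ^ 2) / 2)))
    · apply Filter.Eventually.of_forall
      intro t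
      exact ((hf_cont.comp (by continuity)).mul (by continuity)).aestronglyMeasurable
    · apply Filter.Eventually.of_forall
      intro t
      apply Filter.Eventually.of_forall
      intro u
      have hg0 : 0 ≤ (Real.sqrt (2 * Real.pi))⁻¹ * Real.exp (-(u ^ 2) / 2) := by positivity
      rw [norm_mul, Real.norm_eq_abs, Real.norm_eq_abs, abs_of_nonneg hg0]
      exact mul_le_mul_of_nonneg_right (hM _) hg0
    · exact hgi.const_mul M
    · apply Filter.Eventually.of_forall
      intro u
      have hcont : Continuous (fun t : ℝ => z + μ * t + σ * Real.sqrt t * u) := by continuity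
      have h0 : (fun t : ℝ => z + μ * t + σ * Real.sqrt t * u) 0 = z := by simp
      have hT : Filter.Tendsto (fun t : ℝ => f (z + μ * t + σ * Real.sqrt t * u))
          (nhds 0) (nhds (f z)) := by
        have h := (hf_cont.comp hcont).tendsto 0
        simpa [Function.comp_def, h0] using h
      exact (hT.mono_left nhdsWithin_le_nhds).mul_const _
  have : ∫ u, f z * ((Real.sqrt (2 * Real.pi))⁻¹ * Real.exp (-(u ^ 2) / 2)) = f z := by
    rw [integral_const_mul, integral_const_mul, gauss_int]
    have h2π : Real.sqrt (2 * Real.pi) ≠ 0 := by positivity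
    field_simp
  rwa [this] at key

/- STATEMENT 9: With `Ψ(t,x) = (1/(σ√(2πt))) exp(−(x+μt)²/(2σ²t))` and `f : ℝ → ℝ`
continuous with compact support contained in `(0,∞)`, for every `x ≥ 0`:
`lim_{t→0⁺} [(f * Ψ(t,·))(x) − e^{−2μx/σ²}(f * Ψ(t,·))(−x)] = f(x)`,
where `(f*h)(z) = ∫₀^∞ f(y) h(z−y) dy`. -/
theorem reflected_convolution_initial_condition
    (μ σ : ℝ) (hσ : 0 < σ)
    (f : ℝ → ℝ) (hf_cont : Continuous f) (hf_supp : HasCompactSupport f)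
    (hf_supp' : tsupport f ⊆ Set.Ioi 0)
    (Ψ : ℝ → ℝ → ℝ)
    (hΨ : ∀ t : ℝ, 0 < t → ∀ x : ℝ,
      Ψ t x = (1 / (σ * Real.sqrt (2 * Real.pi * t))) *
        Real.exp (-(x + μ * t) ^ 2 / (2 * σ ^ 2 * t)))
    (x : ℝ) (hx : 0 ≤ x) :
    Filter.Tendsto
      (fun t => (∫ y in Set.Ioi (0:ℝ), f y * Ψ t (x - y)) -
        Real.exp (-2 * μ * x / σ ^ 2) * ∫ y in Set.Ioi (0:ℝ), f y * Ψ t (-x - y))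
      (nhdsWithin 0 (Set.Ioi 0)) (nhds (f x)) := by
  have hf0 : ∀ y, y ∉ Set.Ioi (0:ℝ) → f y = 0 := fun y hy =>
    image_eq_zero_of_notMem_tsupport (fun h => hy (hf_supp' h))
  have hfneg : f (-x) = 0 := hf0 _ (by simp; linarith)
  have heq : ∀ᶠ t in nhdsWithin (0:ℝ) (Set.Ioi 0),
      (∫ y in Set.Ioi (0:ℝ), f y * Ψ t (x - y)) -
        Real.exp (-2 * μ * x / σ ^ 2) * ∫ y in Set.Ioi (0:ℝ), f y * Ψ t (-x - y)
      = (∫ u, f (x + μ * t + σ * Real.sqrt t * u) *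
          ((Real.sqrt (2 * Real.pi))⁻¹ * Real.exp (-(u ^ 2) / 2))) -
        Real.exp (-2 * μ * x / σ ^ 2) * ∫ u, f (-x + μ * t + σ * Real.sqrt t * u) *
          ((Real.sqrt (2 * Real.pi))⁻¹ * Real.exp (-(u ^ 2) / 2)) := by
    filter_upwards [self_mem_nhdsWithin] with t ht
    have ht' : (0:ℝ) < t := ht
    have e1 : ∫ y in Set.Ioi (0:ℝ), f y * Ψ t (x - y)
        = ∫ u, f (x + μ * t + σ * Real.sqrt t * u) *
          ((Real.sqrt (2 * Real.pi))⁻¹ * Real.exp (-(u ^ 2) / 2)) := by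
      rw [← cov μ σ hσ t ht' f hf0 x]
      apply setIntegral_congr_fun measurableSet_Ioi
      intro y _
      simp only [hΨ t ht']
    have e2 : ∫ y in Set.Ioi (0:ℝ), f y * Ψ t (-x - y)
        = ∫ u, f (-x + μ * t + σ * Real.sqrt t * u) *
          ((Real.sqrt (2 * Real.pi))⁻¹ * Real.exp (-(u ^ 2) / 2)) := by
      rw [← cov μ σ hσ t ht' f hf0 (-x)]
      apply setIntegral_congr_fun measurableSet_Ioi
      intro y _
      simp only [hΨ t ht']
    rw [e1, e2]
  apply Filter.Tendsto.congr' (Filter.EventuallyEq.symm heq)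
  have h1 := tendsto_aux μ σ f hf_cont hf_supp x
  have h2 := (tendsto_aux μ σ f hf_cont hf_supp (-x)).const_mul
    (Real.exp (-2 * μ * x / σ ^ 2))
  have := h1.sub h2
  simpa [hfneg] using this
end

section
/- Let b, δ, N > 0, g a probability density on [0,δ] with moments m₁, m₂; set μ := b m₁ and σ² := b m₂/N. Let λ > 0 with N ≥ λ m₂/m₁, let λ_N := λ(1 − λσ²/(2μ)) = λ(1 − λ m₂/(2 m₁ N)), and let λ' ∈ [0, 2μ/σ² − 2λ). Let f : [0,∞) → ℝ be continuous and integrable with |f(x)| ≤ D e^{−λx}(1 − e^{−λ'x}) for all x ≥ 0, for some D > 0. Define v(0,·) := f and, for t > 0 and x ≥ 0, v(t,x) := (f * Ψ(t,·))(x) − exp(−2μx/σ²)(f * Ψ(t,·))(−x), where Ψ(t,y) := (1/(σ√(2πt))) exp(−(y + μt)²/(2σ²t)) and (f * h)(z) := ∫₀^∞ f(y) h(z − y) dy. Then for all t ≥ 0 and x ≥ 0: |v(t,x)| ≤ D exp(−μ λ_N t) ( e^{−λx} − e^{−(2μ/σ²)(λ_N/λ) x} ). -/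
open MeasureTheory Real Set

lemma gauss_integrable' (p : ℝ) (hp : 0 < p) (m : ℝ) :
    Integrable (fun y : ℝ => Real.exp (-p * (y - m) ^ 2)) :=
  (integrable_exp_neg_mul_sq hp).comp_sub_right m

lemma gauss_integral' (p : ℝ) (hp : 0 < p) (m : ℝ) :
    (∫ y : ℝ, Real.exp (-p * (y - m) ^ 2)) = Real.sqrt (Real.pi / p) := by
  rw [show (fun y : ℝ => Real.exp (-p * (y - m) ^ 2)) =
      (fun y : ℝ => (fun u : ℝ => Real.exp (-p * u ^ 2)) (y - m)) from rfl,
    integral_sub_right_eq_self (fun u : ℝ => Real.exp (-p * u ^ 2)) m,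
    integral_gaussian]

/- STATEMENT 10: Bound on the second spatial derivative of the approximated model.
With `μ = b m₁`, `σ² = b m₂/N`, `λ_N = λ(1 − λσ²/(2μ))`, `λ' ∈ [0, 2μ/σ² − 2λ)`,
`N ≥ λ m₂/m₁`, `|f(x)| ≤ D e^{−λx}(1 − e^{−λ'x})` on `[0,∞)`, and
`v(t,x) = (f * Ψ(t,·))(x) − e^{−2μx/σ²}(f * Ψ(t,·))(−x)` for `t > 0`, `v(0,·) = f`,
then for all `t ≥ 0`, `x ≥ 0`:
`|v(t,x)| ≤ D e^{−μλ_N t}(e^{−λx} − e^{−(2μ/σ²)(λ_N/λ)x})`. -/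
theorem bound_second_derivative
    (b δ N : ℝ) (hb : 0 < b) (hδ : 0 < δ) (hN : 0 < N)
    (g : ℝ → ℝ) (hg_nonneg : ∀ v ∈ Set.Icc (0:ℝ) δ, 0 ≤ g v)
    (hg_int : IntervalIntegrable g MeasureTheory.volume 0 δ)
    (hg_prob : ∫ v in (0:ℝ)..δ, g v = 1)
    (m₁ m₂ : ℝ)
    (hm₁ : m₁ = ∫ v in (0:ℝ)..δ, v * g v)
    (hm₂ : m₂ = ∫ v in (0:ℝ)..δ, v ^ 2 * g v)
    (μ σ : ℝ) (hμ : μ = b * m₁) (hσ2 : σ ^ 2 = b * m₂ / N) (hσ : 0 < σ)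
    (lam lamN lam' : ℝ) (hlam : 0 < lam) (hNlam : N ≥ lam * m₂ / m₁)
    (hlamN : lamN = lam * (1 - lam * σ ^ 2 / (2 * μ)))
    (hlam' : lam' ∈ Set.Ico (0:ℝ) (2 * μ / σ ^ 2 - 2 * lam))
    (D : ℝ) (hD : 0 < D)
    (f : ℝ → ℝ) (hf_cont : ContinuousOn f (Set.Ici 0))
    (hf_int : MeasureTheory.IntegrableOn f (Set.Ioi 0))
    (hf_bound : ∀ x : ℝ, 0 ≤ x →
      |f x| ≤ D * Real.exp (-lam * x) * (1 - Real.exp (-lam' * x)))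
    (Ψ : ℝ → ℝ → ℝ)
    (hΨ : ∀ t : ℝ, 0 < t → ∀ y : ℝ,
      Ψ t y = (1 / (σ * Real.sqrt (2 * Real.pi * t))) *
        Real.exp (-(y + μ * t) ^ 2 / (2 * σ ^ 2 * t)))
    (v : ℝ → ℝ → ℝ)
    (hv0 : ∀ x : ℝ, 0 ≤ x → v 0 x = f x)
    (hv : ∀ t : ℝ, 0 < t → ∀ x : ℝ, 0 ≤ x →
      v t x = (∫ y in Set.Ioi (0:ℝ), f y * Ψ t (x - y)) -
        Real.exp (-2 * μ * x / σ ^ 2) * ∫ y in Set.Ioi (0:ℝ), f y * Ψ t (-x - y)) :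
    ∀ t : ℝ, 0 ≤ t → ∀ x : ℝ, 0 ≤ x →
      |v t x| ≤ D * Real.exp (-μ * lamN * t) *
        (Real.exp (-lam * x) - Real.exp (-(2 * μ / σ ^ 2) * (lamN / lam) * x)) := by
  intro t ht0 x hx
  have hσ2pos : (0:ℝ) < σ ^ 2 := by positivity
  have hσne : σ ≠ 0 := ne_of_gt hσ
  have hlamne : lam ≠ 0 := ne_of_gt hlam
  have hκ : 2 * lam < 2 * μ / σ ^ 2 := by
    have := hlam'.1; have := hlam'.2; linarith
  have h2μ : 0 < 2 * μ / σ ^ 2 := lt_trans (by linarith) hκ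
  have hμpos : 0 < μ := by
    rcases div_pos_iff.mp h2μ with ⟨h, _⟩ | ⟨_, h⟩
    · linarith
    · linarith
  have hμne : μ ≠ 0 := ne_of_gt hμpos
  obtain ⟨Λ, hΛdef⟩ : ∃ Λ : ℝ, Λ = 2 * μ / σ ^ 2 - lam := ⟨_, rfl⟩
  have hΛlam : lam ≤ Λ := by
    have := hlam'.1; have := hlam'.2; linarith
  have hΛx : 2 * μ / σ ^ 2 * (lamN / lam) * x = Λ * x := by
    rw [hlamN, hΛdef]; field_simp
  simp only [neg_mul]
  rw [hΛx]
  rcases eq_or_lt_of_le ht0 with ht | ht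
  · -- t = 0
    subst ht
    rw [hv0 x hx]
    simp only [mul_zero, neg_zero, Real.exp_zero, mul_one]
    have hfb := hf_bound x hx
    simp only [neg_mul] at hfb
    have he : Real.exp (-(Λ * x)) ≤ Real.exp (-(lam * x)) * Real.exp (-(lam' * x)) := by
      rw [← Real.exp_add]
      apply Real.exp_le_exp.mpr
      linarith [mul_nonneg hx (show (0:ℝ) ≤ Λ - lam - lam' by
        have := hlam'.2; linarith)]
    calc |f x| ≤ D * Real.exp (-(lam * x)) * (1 - Real.exp (-(lam' * x))) := hfb
      _ ≤ D * (Real.exp (-(lam * x)) - Real.exp (-(Λ * x))) := by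
          linarith [mul_nonneg hD.le (sub_nonneg.mpr he)]
  · -- t > 0
    have htne : t ≠ 0 := ne_of_gt ht
    have hspos : 0 < Real.sqrt (2 * Real.pi * t) := Real.sqrt_pos.mpr (by positivity)
    obtain ⟨c, hcdef⟩ : ∃ c : ℝ, c = 1 / (σ * Real.sqrt (2 * Real.pi * t)) := ⟨_, rfl⟩
    have hc : 0 < c := by rw [hcdef]; positivity
    have e1 : ∀ A B : ℝ, Real.exp A * (c * Real.exp B) = c * Real.exp (A + B) := by
      intro A B; rw [Real.exp_add]; ring
    have e2 : ∀ A B : ℝ, (c * Real.exp A) * Real.exp B = c * Real.exp (A + B) := by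
      intro A B; rw [Real.exp_add]; ring
    -- base facts
    have base_fun : ∀ a z : ℝ, (fun y : ℝ => Real.exp (-(a * y)) * Ψ t (z - y)) =
        (fun y : ℝ => (c * Real.exp (a ^ 2 * σ ^ 2 * t / 2 - a * (z + μ * t))) *
          Real.exp (-(1 / (2 * σ ^ 2 * t)) * (y - (z + μ * t - a * σ ^ 2 * t)) ^ 2)) := by
      intro a z
      funext y
      rw [hΨ t ht, ← hcdef, e1, e2]
      congr 1
      field_simp
      ring
    have base_int : ∀ a z : ℝ, Integrable (fun y : ℝ => Real.exp (-(a * y)) * Ψ t (z - y)) := by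
      intro a z
      rw [base_fun a z]
      exact (gauss_integrable' _ (by positivity) _).const_mul _
    have base_val : ∀ a z : ℝ, (∫ y : ℝ, Real.exp (-(a * y)) * Ψ t (z - y)) =
        Real.exp (a ^ 2 * σ ^ 2 * t / 2 - a * μ * t - a * z) := by
      intro a z
      rw [base_fun a z, integral_const_mul, gauss_integral' _ (by positivity) _]
      have hsqrt : Real.sqrt (Real.pi / (1 / (2 * σ ^ 2 * t))) = σ * Real.sqrt (2 * Real.pi * t) := by
        rw [show Real.pi / (1 / (2 * σ ^ 2 * t)) = σ ^ 2 * (2 * Real.pi * t) by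
          field_simp]
        rw [Real.sqrt_mul (sq_nonneg σ), Real.sqrt_sq hσ.le]
      rw [hsqrt, hcdef]
      have hC : ∀ E : ℝ, 1 / (σ * Real.sqrt (2 * Real.pi * t)) * Real.exp E *
          (σ * Real.sqrt (2 * Real.pi * t)) = Real.exp E := by
        intro E; field_simp
      rw [hC]
      congr 1
      ring
    -- nonnegativity of the kernel
    have hKnn : ∀ y : ℝ, 0 ≤ y →
        0 ≤ Ψ t (x - y) - Real.exp (-2 * μ * x / σ ^ 2) * Ψ t (-x - y) := by
      intro y hy
      have h1 : Real.exp (-2 * μ * x / σ ^ 2) * Ψ t (-x - y) ≤ Ψ t (x - y) := by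
        simp only [hΨ t ht]
        rw [← hcdef, e1]
        apply mul_le_mul_of_nonneg_left _ hc.le
        apply Real.exp_le_exp.mpr
        have key : (-((x - y) + μ * t) ^ 2 / (2 * σ ^ 2 * t)) -
            (-2 * μ * x / σ ^ 2 + -((-x - y) + μ * t) ^ 2 / (2 * σ ^ 2 * t)) =
            2 * x * y / (σ ^ 2 * t) := by
          field_simp
          ring
        have hnn : 0 ≤ 2 * x * y / (σ ^ 2 * t) := by positivity
        linarith
      linarith
    -- reflection identity
    have key_refl : ∀ y : ℝ,
        Real.exp (-2 * μ * x / σ ^ 2) *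
          ((Real.exp (-(lam * y)) - Real.exp (-(Λ * y))) * Ψ t (-x - y)) =
        -((Real.exp (-(lam * -y)) - Real.exp (-(Λ * -y))) * Ψ t (x - -y)) := by
      intro y
      simp only [hΨ t ht]
      rw [← hcdef]
      have i1 : Real.exp (-2 * μ * x / σ ^ 2) * (Real.exp (-(lam * y)) *
          Real.exp (-((-x - y) + μ * t) ^ 2 / (2 * σ ^ 2 * t))) =
          Real.exp (-(Λ * -y)) * Real.exp (-((x - -y) + μ * t) ^ 2 / (2 * σ ^ 2 * t)) := by
        rw [← Real.exp_add, ← Real.exp_add, ← Real.exp_add]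
        congr 1
        rw [hΛdef]
        field_simp
        ring
      have i2 : Real.exp (-2 * μ * x / σ ^ 2) * (Real.exp (-(Λ * y)) *
          Real.exp (-((-x - y) + μ * t) ^ 2 / (2 * σ ^ 2 * t))) =
          Real.exp (-(lam * -y)) * Real.exp (-((x - -y) + μ * t) ^ 2 / (2 * σ ^ 2 * t)) := by
        rw [← Real.exp_add, ← Real.exp_add, ← Real.exp_add]
        congr 1
        rw [hΛdef]
        field_simp
        ring
      linear_combination c * i1 - c * i2
    -- integrability of the F·Ψ pieces
    have intFP : Integrable (fun y : ℝ =>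
        (Real.exp (-(lam * y)) - Real.exp (-(Λ * y))) * Ψ t (x - y)) := by
      refine ((base_int lam x).sub (base_int Λ x)).congr
        (Filter.Eventually.of_forall fun y => by simp only [Pi.sub_apply]; ring)
    have intFM : Integrable (fun y : ℝ =>
        (Real.exp (-(lam * y)) - Real.exp (-(Λ * y))) * Ψ t (-x - y)) := by
      refine ((base_int lam (-x)).sub (base_int Λ (-x))).congr
        (Filter.Eventually.of_forall fun y => by simp only [Pi.sub_apply]; ring)
    have intFK : Integrable (fun y : ℝ =>
        (Real.exp (-(lam * y)) - Real.exp (-(Λ * y))) *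
          (Ψ t (x - y) - Real.exp (-2 * μ * x / σ ^ 2) * Ψ t (-x - y))) := by
      refine (intFP.sub (intFM.const_mul (Real.exp (-2 * μ * x / σ ^ 2)))).congr
        (Filter.Eventually.of_forall fun y => by simp only [Pi.sub_apply]; ring)
    -- integrability of f against the kernels
    have hΨc : ∀ z : ℝ, Continuous fun y : ℝ => Ψ t (z - y) := by
      intro z
      have : (fun y : ℝ => Ψ t (z - y)) = fun y : ℝ =>
          1 / (σ * Real.sqrt (2 * Real.pi * t)) *
            Real.exp (-((z - y) + μ * t) ^ 2 / (2 * σ ^ 2 * t)) := by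
        funext y; rw [hΨ t ht]
      rw [this]
      fun_prop
    have hΨb : ∀ z y : ℝ, ‖Ψ t (z - y)‖ ≤ c := by
      intro z y
      rw [hΨ t ht, Real.norm_eq_abs, abs_of_nonneg (by positivity), ← hcdef]
      have h1 : Real.exp (-((z - y) + μ * t) ^ 2 / (2 * σ ^ 2 * t)) ≤ 1 := by
        apply Real.exp_le_one_iff.mpr
        have h2 : (0:ℝ) ≤ 2 * σ ^ 2 * t := by positivity
        exact div_nonpos_iff.mpr (Or.inr ⟨neg_nonpos.mpr (sq_nonneg _), h2⟩)
      exact mul_le_of_le_one_right hc.le h1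
    have intfP : IntegrableOn (fun y : ℝ => f y * Ψ t (x - y)) (Ioi 0) := by
      exact (hf_int.bdd_mul ((hΨc x).aestronglyMeasurable.restrict) (Filter.Eventually.of_forall fun y => hΨb x y)).congr
        (Filter.Eventually.of_forall fun y => mul_comm (Ψ t (x - y)) (f y))
    have intfM : IntegrableOn (fun y : ℝ => f y * Ψ t (-x - y)) (Ioi 0) := by
      exact (hf_int.bdd_mul ((hΨc (-x)).aestronglyMeasurable.restrict) (Filter.Eventually.of_forall fun y => hΨb (-x) y)).congr
        (Filter.Eventually.of_forall fun y => mul_comm (Ψ t (-x - y)) (f y))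
    -- rewrite v as a single integral
    have hveq : v t x = ∫ y in Ioi (0:ℝ),
        f y * (Ψ t (x - y) - Real.exp (-2 * μ * x / σ ^ 2) * Ψ t (-x - y)) := by
      rw [hv t ht x hx, ← integral_const_mul, ← integral_sub intfP
        (intfM.const_mul (Real.exp (-2 * μ * x / σ ^ 2)))]
      refine setIntegral_congr_fun measurableSet_Ioi fun y _ => ?_
      ring
    -- bound the integral
    have habs : |∫ y in Ioi (0:ℝ),
        f y * (Ψ t (x - y) - Real.exp (-2 * μ * x / σ ^ 2) * Ψ t (-x - y))| ≤
        ∫ y in Ioi (0:ℝ), D * ((Real.exp (-(lam * y)) - Real.exp (-(Λ * y))) *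
          (Ψ t (x - y) - Real.exp (-2 * μ * x / σ ^ 2) * Ψ t (-x - y))) := by
      have h1 := norm_integral_le_integral_norm (μ := volume.restrict (Ioi (0:ℝ)))
        (fun y : ℝ => f y * (Ψ t (x - y) - Real.exp (-2 * μ * x / σ ^ 2) * Ψ t (-x - y)))
      rw [Real.norm_eq_abs] at h1
      refine le_trans h1 ?_
      refine integral_mono_of_nonneg (Filter.Eventually.of_forall fun y => norm_nonneg _)
        ((intFK.const_mul D).integrableOn) ?_
      refine (ae_restrict_iff' measurableSet_Ioi).mpr (Filter.Eventually.of_forall fun y hy => ?_)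
      have hy0 : (0:ℝ) < y := hy
      have hK' := hKnn y hy0.le
      have hfb := hf_bound y hy0.le
      simp only [neg_mul] at hfb
      have he : Real.exp (-(Λ * y)) ≤ Real.exp (-(lam * y)) * Real.exp (-(lam' * y)) := by
        rw [← Real.exp_add]
        apply Real.exp_le_exp.mpr
        linarith [mul_nonneg hy0.le (show (0:ℝ) ≤ Λ - lam - lam' by
          have := hlam'.2; linarith)]
      simp only []
      rw [Real.norm_eq_abs, abs_mul, abs_of_nonneg hK']
      calc |f y| * (Ψ t (x - y) - Real.exp (-2 * μ * x / σ ^ 2) * Ψ t (-x - y)) ≤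
          (D * Real.exp (-(lam * y)) * (1 - Real.exp (-(lam' * y)))) *
            (Ψ t (x - y) - Real.exp (-2 * μ * x / σ ^ 2) * Ψ t (-x - y)) :=
            mul_le_mul_of_nonneg_right hfb hK'
        _ ≤ D * ((Real.exp (-(lam * y)) - Real.exp (-(Λ * y))) *
            (Ψ t (x - y) - Real.exp (-2 * μ * x / σ ^ 2) * Ψ t (-x - y))) := by
            linarith [mul_nonneg (mul_nonneg hD.le hK') (sub_nonneg.mpr he)]
    -- compute the dominating integral
    have hrefl : (∫ y in Ioi (0:ℝ), Real.exp (-2 * μ * x / σ ^ 2) *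
        ((Real.exp (-(lam * y)) - Real.exp (-(Λ * y))) * Ψ t (-x - y))) =
        - ∫ y in Iic (0:ℝ), (Real.exp (-(lam * y)) - Real.exp (-(Λ * y))) * Ψ t (x - y) := by
      rw [show (fun y : ℝ => Real.exp (-2 * μ * x / σ ^ 2) *
          ((Real.exp (-(lam * y)) - Real.exp (-(Λ * y))) * Ψ t (-x - y))) =
          (fun y : ℝ => -((Real.exp (-(lam * -y)) - Real.exp (-(Λ * -y))) * Ψ t (x - -y))) from
          funext fun y => key_refl y]
      rw [integral_neg]
      congr 1
      rw [integral_comp_neg_Ioi 0 (fun u : ℝ => (Real.exp (-(lam * u)) - Real.exp (-(Λ * u))) * Ψ t (x - u))]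
      norm_num
    have hsplit : (∫ y in Iic (0:ℝ), (Real.exp (-(lam * y)) - Real.exp (-(Λ * y))) * Ψ t (x - y)) +
        (∫ y in Ioi (0:ℝ), (Real.exp (-(lam * y)) - Real.exp (-(Λ * y))) * Ψ t (x - y)) =
        ∫ y : ℝ, (Real.exp (-(lam * y)) - Real.exp (-(Λ * y))) * Ψ t (x - y) :=
      intervalIntegral.integral_Iic_add_Ioi intFP.integrableOn intFP.integrableOn
    have hvalP : (∫ y : ℝ, (Real.exp (-(lam * y)) - Real.exp (-(Λ * y))) * Ψ t (x - y)) =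
        Real.exp (-(μ * lamN * t)) * (Real.exp (-(lam * x)) - Real.exp (-(Λ * x))) := by
      rw [show (fun y : ℝ => (Real.exp (-(lam * y)) - Real.exp (-(Λ * y))) * Ψ t (x - y)) =
          (fun y : ℝ => Real.exp (-(lam * y)) * Ψ t (x - y) - Real.exp (-(Λ * y)) * Ψ t (x - y)) from
          funext fun y => by ring]
      rw [integral_sub (base_int lam x) (base_int Λ x), base_val, base_val, mul_sub,
        ← Real.exp_add, ← Real.exp_add]
      congr 2
      · rw [hlamN]; field_simp; ring
      · rw [hlamN, hΛdef]; field_simp; ring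
    have hfinal : (∫ y in Ioi (0:ℝ), D * ((Real.exp (-(lam * y)) - Real.exp (-(Λ * y))) *
        (Ψ t (x - y) - Real.exp (-2 * μ * x / σ ^ 2) * Ψ t (-x - y)))) =
        D * (Real.exp (-(μ * lamN * t)) * (Real.exp (-(lam * x)) - Real.exp (-(Λ * x)))) := by
      rw [integral_const_mul]
      congr 1
      rw [show (fun y : ℝ => (Real.exp (-(lam * y)) - Real.exp (-(Λ * y))) *
          (Ψ t (x - y) - Real.exp (-2 * μ * x / σ ^ 2) * Ψ t (-x - y))) =
          (fun y : ℝ => (Real.exp (-(lam * y)) - Real.exp (-(Λ * y))) * Ψ t (x - y) -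
            Real.exp (-2 * μ * x / σ ^ 2) *
              ((Real.exp (-(lam * y)) - Real.exp (-(Λ * y))) * Ψ t (-x - y))) from
          funext fun y => by ring]
      rw [integral_sub intFP.integrableOn
        ((intFM.const_mul (Real.exp (-2 * μ * x / σ ^ 2))).integrableOn), hrefl]
      rw [sub_neg_eq_add, add_comm, hsplit, hvalP]
    rw [hveq]
    calc |∫ y in Ioi (0:ℝ),
        f y * (Ψ t (x - y) - Real.exp (-2 * μ * x / σ ^ 2) * Ψ t (-x - y))| ≤
        ∫ y in Ioi (0:ℝ), D * ((Real.exp (-(lam * y)) - Real.exp (-(Λ * y))) *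
          (Ψ t (x - y) - Real.exp (-2 * μ * x / σ ^ 2) * Ψ t (-x - y))) := habs
      _ = D * (Real.exp (-(μ * lamN * t)) * (Real.exp (-(lam * x)) - Real.exp (-(Λ * x)))) := hfinal
      _ = D * Real.exp (-(μ * lamN * t)) * (Real.exp (-(lam * x)) - Real.exp (-(Λ * x))) := by ring
end

section
/- Let b, δ, N > 0, g a probability density on [0,δ] with moments m₁, m₂; set μ := b m₁, σ² := b m₂/N, λ > 0, and λ_N := λ(1 − λσ²/(2μ)). Let f₃, f₂ : [0,∞) → ℝ be measurable and integrable with |f₃(x)| ≤ C e^{−λx} and |f₂(x)| ≤ D e^{−λx} for all x ≥ 0, for some C, D > 0. Define for t > 0 and x ≥ 0: w(t,x) := (f₃ * Ψ(t,·))(x) + exp(−2μx/σ²) [ (f₃ * Ψ(t,·))(−x) + (2μ/σ²)(f₂ * Ψ(t,·))(−x) ], where Ψ(t,y) := (1/(σ√(2πt))) exp(−(y + μt)²/(2σ²t)) and (f * h)(z) := ∫₀^∞ f(y) h(z − y) dy. Then for all t > 0 and x ≥ 0: |w(t,x)| ≤ C exp(−μ λ_N t − λx) + (C + D·(2μ/σ²))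 exp(−μ λ_N t − (2μ/σ²)(λ_N/λ) x). -/
open MeasureTheory Real Set


lemma gauss_key (σ μ lam t z y : ℝ) (hσ : 0 < σ) (ht : 0 < t) :
    Real.exp (-lam*y) * ((1/(σ*Real.sqrt (2*Real.pi*t))) *
      Real.exp (-((z - y) + μ*t)^2/(2*σ^2*t)))
    = Real.exp (-lam*z - lam*μ*t + lam^2*σ^2*t/2) *
      ProbabilityTheory.gaussianPDFReal (z + μ*t - lam*σ^2*t)
        ⟨σ^2*t, by positivity⟩ y := by
  unfold ProbabilityTheory.gaussianPDFReal
  erw [NNReal.coe_mk]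
  have hsqrt : Real.sqrt (2*Real.pi*(σ^2*t)) = σ * Real.sqrt (2*Real.pi*t) := by
    rw [show 2*Real.pi*(σ^2*t) = σ^2 * (2*Real.pi*t) by ring,
      Real.sqrt_mul (sq_nonneg σ), Real.sqrt_sq hσ.le]
  rw [hsqrt, mul_left_comm, mul_left_comm (Real.exp (-lam*z - lam*μ*t + lam^2*σ^2*t/2)),
    ← Real.exp_add, ← Real.exp_add, one_div]
  congr 2
  have h1 : σ^2*t ≠ 0 := by positivity
  field_simp
  ring

lemma conv_bound (σ μ lam t K : ℝ) (hσ : 0 < σ) (hlam : 0 < lam) (ht : 0 < t) (hK : 0 ≤ K)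
    (f : ℝ → ℝ) (hf_int : MeasureTheory.IntegrableOn f (Set.Ioi 0))
    (hf_b : ∀ y : ℝ, 0 ≤ y → |f y| ≤ K * Real.exp (-lam*y)) (z : ℝ) :
    |∫ y in Set.Ioi (0:ℝ), f y * ((1/(σ*Real.sqrt (2*Real.pi*t))) *
      Real.exp (-((z - y) + μ*t)^2/(2*σ^2*t)))|
    ≤ K * Real.exp (-lam*z - lam*μ*t + lam^2*σ^2*t/2) := by
  set Φ : ℝ → ℝ := fun y => (1/(σ*Real.sqrt (2*Real.pi*t))) *
      Real.exp (-((z - y) + μ*t)^2/(2*σ^2*t)) with hΦdef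
  set v : NNReal := ⟨σ^2*t, by positivity⟩ with hvdef
  have hvcoe : (v : ℝ) = σ^2*t := rfl
  have hv : v ≠ 0 := by
    intro h
    have : (v : ℝ) = 0 := by rw [h]; simp
    rw [hvcoe] at this
    exact absurd this (by positivity)
  set m : ℝ := z + μ*t - lam*σ^2*t with hmdef
  set E : ℝ := Real.exp (-lam*z - lam*μ*t + lam^2*σ^2*t/2) with hEdef
  have hΦpos : ∀ y, 0 ≤ Φ y := by
    intro y
    have h1 : 0 < σ*Real.sqrt (2*Real.pi*t) := by positivity
    positivity
  have hG_int : Integrable (fun y => K * E * ProbabilityTheory.gaussianPDFReal m v y) :=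
    (ProbabilityTheory.integrable_gaussianPDFReal m v).const_mul _
  have key : ∀ y : ℝ, 0 ≤ y → |f y * Φ y| ≤ K * E * ProbabilityTheory.gaussianPDFReal m v y := by
    intro y hy
    rw [abs_mul, abs_of_nonneg (hΦpos y)]
    have h1 : |f y| * Φ y ≤ (K * Real.exp (-lam*y)) * Φ y :=
      mul_le_mul_of_nonneg_right (hf_b y hy) (hΦpos y)
    refine h1.trans_eq ?_
    rw [mul_assoc, gauss_key σ μ lam t z y hσ ht, hEdef, hmdef]
    ring
  calc |∫ y in Set.Ioi (0:ℝ), f y * Φ y|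
      ≤ ∫ y in Set.Ioi (0:ℝ), |f y| * |Φ y| := by
        simpa [Real.norm_eq_abs, abs_mul] using
          norm_integral_le_integral_norm (μ := volume.restrict (Set.Ioi (0:ℝ)))
            (fun y => f y * Φ y)
    _ ≤ ∫ y in Set.Ioi (0:ℝ), K * E * ProbabilityTheory.gaussianPDFReal m v y := by
        refine integral_mono_of_nonneg
          (ae_of_all _ fun y => mul_nonneg (abs_nonneg _) (abs_nonneg _))
          hG_int.restrict ?_
        exact (ae_restrict_iff' measurableSet_Ioi).mpr
          (ae_of_all _ fun y hy => by
            have := key y (le_of_lt hy); rwa [abs_mul] at this)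
    _ ≤ ∫ y, K * E * ProbabilityTheory.gaussianPDFReal m v y := by
        refine setIntegral_le_integral hG_int (ae_of_all _ fun y => ?_)
        have := ProbabilityTheory.gaussianPDFReal_nonneg m v y
        positivity
    _ = K * E := by
        rw [integral_const_mul, ProbabilityTheory.integral_gaussianPDFReal_eq_one m hv, mul_one]

lemma m1_pos (δ : ℝ) (hδ : 0 < δ) (g : ℝ → ℝ)
    (hg_nonneg : ∀ v ∈ Set.Icc (0:ℝ) δ, 0 ≤ g v)
    (hg_int : IntervalIntegrable g MeasureTheory.volume 0 δ)
    (hg_prob : ∫ v in (0:ℝ)..δ, g v = 1) :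
    0 < ∫ v in (0:ℝ)..δ, v * g v := by
  have hvg_int : IntervalIntegrable (fun v => v * g v) volume 0 δ :=
    hg_int.continuousOn_mul continuous_id.continuousOn
  have hnonneg_ae : 0 ≤ᵐ[volume.restrict (Set.Ioc 0 δ)] fun v => v * g v :=
    (ae_restrict_iff' measurableSet_Ioc).mpr
      (ae_of_all _ fun v hv => mul_nonneg hv.1.le (hg_nonneg v ⟨hv.1.le, hv.2⟩))
  have hnn : 0 ≤ ∫ v in (0:ℝ)..δ, v * g v := by
    rw [intervalIntegral.integral_of_le hδ.le]
    exact integral_nonneg_of_ae hnonneg_ae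
  rcases hnn.lt_or_eq with h | h
  · exact h
  exfalso
  have h0 : (fun v => v * g v) =ᵐ[volume.restrict (Set.Ioc 0 δ)] 0 :=
    (intervalIntegral.integral_eq_zero_iff_of_le_of_nonneg_ae hδ.le hnonneg_ae hvg_int).mp h.symm
  have hg0 : g =ᵐ[volume.restrict (Set.Ioc 0 δ)] 0 := by
    filter_upwards [h0, ae_restrict_mem measurableSet_Ioc] with v hv1 hv2
    exact (mul_eq_zero.mp hv1).resolve_left (ne_of_gt hv2.1)
  have : ∫ v in (0:ℝ)..δ, g v = 0 := by
    rw [intervalIntegral.integral_of_le hδ.le]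
    rw [integral_congr_ae hg0]
    simp
  rw [hg_prob] at this
  exact one_ne_zero this



/- STATEMENT 11: Bound on the third spatial derivative of the approximated model.
With `μ = b m₁`, `σ² = b m₂/N`, `λ_N = λ(1 − λσ²/(2μ))`, `|f₃(x)| ≤ C e^{−λx}`,
`|f₂(x)| ≤ D e^{−λx}` on `[0,∞)`, and
`w(t,x) = (f₃*Ψ(t,·))(x) + e^{−2μx/σ²}[(f₃*Ψ(t,·))(−x) + (2μ/σ²)(f₂*Ψ(t,·))(−x)]`,
then for all `t > 0`, `x ≥ 0`:
`|w(t,x)| ≤ C e^{−μλ_N t − λx} + (C + D(2μ/σ²)) e^{−μλ_N t − (2μ/σ²)(λ_N/λ)x}`. -/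
theorem bound_third_derivative
    (b δ N : ℝ) (hb : 0 < b) (hδ : 0 < δ) (hN : 0 < N)
    (g : ℝ → ℝ) (hg_nonneg : ∀ v ∈ Set.Icc (0:ℝ) δ, 0 ≤ g v)
    (hg_int : IntervalIntegrable g MeasureTheory.volume 0 δ)
    (hg_prob : ∫ v in (0:ℝ)..δ, g v = 1)
    (m₁ m₂ : ℝ)
    (hm₁ : m₁ = ∫ v in (0:ℝ)..δ, v * g v)
    (hm₂ : m₂ = ∫ v in (0:ℝ)..δ, v ^ 2 * g v)
    (μ σ : ℝ) (hμ : μ = b * m₁) (hσ2 : σ ^ 2 = b * m₂ / N) (hσ : 0 < σ)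
    (lam lamN : ℝ) (hlam : 0 < lam)
    (hlamN : lamN = lam * (1 - lam * σ ^ 2 / (2 * μ)))
    (C D : ℝ) (hC : 0 < C) (hD : 0 < D)
    (f₃ f₂ : ℝ → ℝ) (hf₃_meas : Measurable f₃) (hf₂_meas : Measurable f₂)
    (hf₃_int : MeasureTheory.IntegrableOn f₃ (Set.Ioi 0))
    (hf₂_int : MeasureTheory.IntegrableOn f₂ (Set.Ioi 0))
    (hf₃_bound : ∀ x : ℝ, 0 ≤ x → |f₃ x| ≤ C * Real.exp (-lam * x))
    (hf₂_bound : ∀ x : ℝ, 0 ≤ x → |f₂ x| ≤ D * Real.exp (-lam * x))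
    (Ψ : ℝ → ℝ → ℝ)
    (hΨ : ∀ t : ℝ, 0 < t → ∀ y : ℝ,
      Ψ t y = (1 / (σ * Real.sqrt (2 * Real.pi * t))) *
        Real.exp (-(y + μ * t) ^ 2 / (2 * σ ^ 2 * t)))
    (w : ℝ → ℝ → ℝ)
    (hw : ∀ t : ℝ, 0 < t → ∀ x : ℝ, 0 ≤ x →
      w t x = (∫ y in Set.Ioi (0:ℝ), f₃ y * Ψ t (x - y)) +
        Real.exp (-2 * μ * x / σ ^ 2) *
          ((∫ y in Set.Ioi (0:ℝ), f₃ y * Ψ t (-x - y)) +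
            (2 * μ / σ ^ 2) * ∫ y in Set.Ioi (0:ℝ), f₂ y * Ψ t (-x - y))) :
    ∀ t : ℝ, 0 < t → ∀ x : ℝ, 0 ≤ x →
      |w t x| ≤ C * Real.exp (-μ * lamN * t - lam * x) +
        (C + D * (2 * μ / σ ^ 2)) *
          Real.exp (-μ * lamN * t - (2 * μ / σ ^ 2) * (lamN / lam) * x) := by
  intro t ht x hx
  have hμpos : 0 < μ := by
    rw [hμ, hm₁]
    exact mul_pos hb (m1_pos δ hδ g hg_nonneg hg_int hg_prob)
  have hμne : μ ≠ 0 := hμpos.ne'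
  have hσne : σ ≠ 0 := hσ.ne'
  have hlamne : lam ≠ 0 := hlam.ne'
  have hcpos : 0 ≤ 2 * μ / σ ^ 2 := by positivity
  have hepos : 0 ≤ Real.exp (-2 * μ * x / σ ^ 2) := (Real.exp_pos _).le
  -- bound on first integral
  have hI1 : |∫ y in Set.Ioi (0:ℝ), f₃ y * Ψ t (x - y)| ≤
      C * Real.exp (-μ * lamN * t - lam * x) := by
    have h := conv_bound σ μ lam t C hσ hlam ht hC.le f₃ hf₃_int
      (fun y hy => by simpa using hf₃_bound y hy) x
    rw [show -μ * lamN * t - lam * x = -lam*x - lam*μ*t + lam^2*σ^2*t/2 by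
      rw [hlamN]; field_simp; ring]
    simpa only [hΨ t ht] using h
  have hI2 : |∫ y in Set.Ioi (0:ℝ), f₃ y * Ψ t (-x - y)| ≤
      C * Real.exp (lam * x - μ * lamN * t) := by
    have h := conv_bound σ μ lam t C hσ hlam ht hC.le f₃ hf₃_int
      (fun y hy => by simpa using hf₃_bound y hy) (-x)
    rw [show lam * x - μ * lamN * t = -lam*(-x) - lam*μ*t + lam^2*σ^2*t/2 by
      rw [hlamN]; field_simp; ring]
    simpa only [hΨ t ht] using h
  have hI3 : |∫ y in Set.Ioi (0:ℝ), f₂ y * Ψ t (-x - y)| ≤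
      D * Real.exp (lam * x - μ * lamN * t) := by
    have h := conv_bound σ μ lam t D hσ hlam ht hD.le f₂ hf₂_int
      (fun y hy => by simpa using hf₂_bound y hy) (-x)
    rw [show lam * x - μ * lamN * t = -lam*(-x) - lam*μ*t + lam^2*σ^2*t/2 by
      rw [hlamN]; field_simp; ring]
    simpa only [hΨ t ht] using h
  rw [hw t ht x hx]
  have hexp2 : Real.exp (-2 * μ * x / σ ^ 2) * Real.exp (lam * x - μ * lamN * t) =
      Real.exp (-μ * lamN * t - (2 * μ / σ ^ 2) * (lamN / lam) * x) := by
    rw [← Real.exp_add]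
    congr 1
    rw [hlamN]
    field_simp
    ring
  calc |(∫ y in Set.Ioi (0:ℝ), f₃ y * Ψ t (x - y)) +
        Real.exp (-2 * μ * x / σ ^ 2) *
          ((∫ y in Set.Ioi (0:ℝ), f₃ y * Ψ t (-x - y)) +
            (2 * μ / σ ^ 2) * ∫ y in Set.Ioi (0:ℝ), f₂ y * Ψ t (-x - y))|
      ≤ |∫ y in Set.Ioi (0:ℝ), f₃ y * Ψ t (x - y)| +
        Real.exp (-2 * μ * x / σ ^ 2) *
          (|∫ y in Set.Ioi (0:ℝ), f₃ y * Ψ t (-x - y)| +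
            (2 * μ / σ ^ 2) * |∫ y in Set.Ioi (0:ℝ), f₂ y * Ψ t (-x - y)|) := by
        refine (abs_add_le _ _).trans ?_
        gcongr
        rw [abs_mul, abs_of_nonneg hepos]
        gcongr
        refine (abs_add_le _ _).trans ?_
        gcongr
        rw [abs_mul, abs_of_nonneg hcpos]
    _ ≤ C * Real.exp (-μ * lamN * t - lam * x) +
        Real.exp (-2 * μ * x / σ ^ 2) *
          (C * Real.exp (lam * x - μ * lamN * t) +
            (2 * μ / σ ^ 2) * (D * Real.exp (lam * x - μ * lamN * t))) := by
        gcongr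
    _ = C * Real.exp (-μ * lamN * t - lam * x) +
        (C + D * (2 * μ / σ ^ 2)) *
          Real.exp (-μ * lamN * t - (2 * μ / σ ^ 2) * (lamN / lam) * x) := by
        rw [← hexp2]; ring
end
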